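/- Suppose Q_{i₀}, …, Q_{j₀} is a sequence of GT patterns and σ is a permutation of {i₀, …, j₀−1} such that Q_{i₀} = P̃, Q_{j₀} = P, and for each k with i₀ ≤ k < j₀, the pattern Q_{k+1} is obtained from Q_k by decreasing by 1 the entry in position i₀ of row σ(k) only. Then σ is the identity permutation. -/
import Mathlib


/-- A Gelfand–Tsetlin pattern for `sl_{r+1}`: rows are indexed `1,…,r+1`,
row `j` has entries `P j 1 ≥ … ≥ P j j`, with the interlacing condition
`P j i ≥ P (j-1) i ≥ P j (i+1)` for `1 ≤ i < j ≤ r+1`. -/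
def IsGTPattern (r : ℕ) (P : ℕ → ℕ → ℤ) : Prop :=
  ∀ i j, 1 ≤ i → i < j → j ≤ r + 1 → P (j-1) i ≤ P j i ∧ P j (i+1) ≤ P (j-1) i

/-- The bounding sequence (last row) of the pattern is `lam`. -/
def Bounded (r : ℕ) (P : ℕ → ℕ → ℤ) (lam : ℕ → ℤ) : Prop :=
  ∀ i, 1 ≤ i → i ≤ r + 1 → P (r+1) i = lam i

/-- Row-wise dominance: `Dom r P' P` means the partial row sums of `P'`
dominate those of `P` in every row. -/
def Dom (r : ℕ) (P' P : ℕ → ℕ → ℤ) : Prop :=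
  ∀ j i, 1 ≤ i → i ≤ j → j ≤ r + 1 →
    ∑ s ∈ Finset.Icc 1 i, P j s ≤ ∑ s ∈ Finset.Icc 1 i, P' j s

/-- The `k`-th coordinate of the weight of a pattern: difference of row sums. -/
def wt (P : ℕ → ℕ → ℤ) (k : ℕ) : ℤ :=
  (∑ i ∈ Finset.Icc 1 k, P k i) - ∑ i ∈ Finset.Icc 1 (k-1), P (k-1) i

/-- The length of a pattern. -/
def lengthP (r : ℕ) (P : ℕ → ℕ → ℤ) : ℤ :=
  ∑ j ∈ Finset.Icc 2 (r+1), ∑ i ∈ Finset.Icc 1 (j-1), (P j i - P (j-1) i)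

/-- If Q i₀, …, Q j₀ is a sequence of GT patterns and σ a permutation of
{i₀, …, j₀-1} with Q i₀ = Pt, Q j₀ = P, and Q (k+1) obtained from Q k by
decreasing by 1 the entry in position i₀ of row σ k only, then σ is the
identity on {i₀, …, j₀-1}. -/
theorem sigma_is_identity (r : ℕ) (lam : ℕ → ℤ) (P Pt : ℕ → ℕ → ℤ) (i₀ j₀ : ℕ)
    (hP : IsGTPattern r P) (hb : Bounded r P lam)
    (hlen : 0 < lengthP r P)
    (hj₀2 : 2 ≤ j₀) (hj₀r : j₀ ≤ r + 1)
    (hj₀d : ∃ i, 1 ≤ i ∧ i < j₀ ∧ P j₀ i ≠ P (j₀-1) i)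
    (hjmin : ∀ j, 2 ≤ j → j < j₀ → ∀ i, 1 ≤ i → i < j → P j i = P (j-1) i)
    (hi₀1 : 1 ≤ i₀) (hi₀j : i₀ < j₀) (hi₀d : P j₀ i₀ ≠ P (j₀-1) i₀)
    (himin : ∀ i, 1 ≤ i → i < i₀ → P j₀ i = P (j₀-1) i)
    (hPt : ∀ j i, Pt j i = if i = i₀ ∧ i₀ ≤ j ∧ j < j₀ then P j i + 1 else P j i)
    (Q : ℕ → ℕ → ℕ → ℤ) (σ : Equiv.Perm ℕ)
    (hσ : ∀ k, i₀ ≤ k → k < j₀ → i₀ ≤ σ k ∧ σ k < j₀)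
    (hQpat : ∀ k, i₀ ≤ k → k ≤ j₀ → IsGTPattern r (Q k))
    (hQ0 : Q i₀ = Pt) (hQlast : Q j₀ = P)
    (hstep : ∀ k, i₀ ≤ k → k < j₀ → ∀ j i,
      Q (k+1) j i = if j = σ k ∧ i = i₀ then Q k j i - 1 else Q k j i) :
    ∀ k, i₀ ≤ k → k < j₀ → σ k = k := by

  have aux : ∀ k, i₀ ≤ k → k ≤ j₀ → (∀ m, i₀ ≤ m → m < k → σ m = m) →
      ∀ j i, Q k j i = if i = i₀ ∧ k ≤ j ∧ j < j₀ then P j i + 1 else P j i := by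
    intro k
    induction k with
    | zero => intro h0 _ _; omega
    | succ n ihn =>
      intro h1 h2 hfix j i
      rcases eq_or_lt_of_le h1 with heq | hlt
      · rw [← heq, hQ0, hPt]
      · have hn1 : i₀ ≤ n := by omega
        have hform := ihn hn1 (by omega) (fun m hm1 hm2 => hfix m hm1 (by omega))
        have hσn : σ n = n := hfix n hn1 (by omega)
        rw [hstep n hn1 (by omega), hσn, hform j i]
        have hform' := hform
        split_ifs <;> omega
  intro k
  induction k using Nat.strong_induction_on with
  | _ k ih =>
    intro hk1 hk2
    by_contra hne
    obtain ⟨hs1, hs2⟩ := hσ k hk1 hk2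
    have hgt : k < σ k := by
      rcases lt_or_ge (σ k : ℕ) k with hlt | hle
      · have := ih (σ k) hlt hs1 (by omega)
        have : σ (σ k : ℕ) = σ k := by rw [this]
        have := σ.injective this
        omega
      · omega
    have hform := aux k hk1 (by omega) (fun m hm1 hm2 => ih m hm2 hm1 (by omega))
    have hpat := hQpat (k+1) (by omega) (by omega)
    have hint := (hpat i₀ (σ k) hi₀1 (by omega) (by omega)).1
    have e1 : Q (k+1) (σ k) i₀ = P (σ k) i₀ := by
      rw [hstep k hk1 hk2, if_pos ⟨rfl, rfl⟩, hform, if_pos ⟨rfl, by omega, hs2⟩]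
      ring
    have e2 : Q (k+1) (σ k - 1) i₀ = P (σ k - 1) i₀ + 1 := by
      rw [hstep k hk1 hk2, if_neg (by omega), hform, if_pos ⟨rfl, by omega, by omega⟩]
    have heqP : P (σ k) i₀ = P (σ k - 1) i₀ := hjmin (σ k) (by omega) hs2 i₀ hi₀1 (by omega)
    rw [e1, e2] at hint
    omega
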